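/- Let c1 and c2 be real numbers with 0 ≤ c1 ≤ c2 ≤ (√(c1(c1+4)) − c1)/2, let n be a positive integer, and let D1 and D2 be finite sequences of nonnegative integers with |D1| + |D2| = n such that the sum of the entries of D1 equals the sum of the entries of D2 and every entry of D1 and of D2 lies in the interval [c1·n, c2·n]. Then (D1, D2) is bigraphic. -/
import Mathlib


/-- A pair of degree sequences (given as multisets) is *bigraphic* if there is a simple
bipartite graph (encoded as its set of edges between the two vertex classes) whose
degree multisets on the two sides are exactly `D1` and `D2`. -/
def BigraphicM (D1 D2 : Multiset ℕ) : Prop :=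
  ∃ E : Finset (Fin (Multiset.card D1) × Fin (Multiset.card D2)),
    D1 = Finset.univ.val.map (fun u => (E.filter (fun p => p.1 = u)).card) ∧
    D2 = Finset.univ.val.map (fun v => (E.filter (fun p => p.2 = v)).card)

open Finset

set_option maxHeartbeats 1000000


lemma exists_top {ι : Type*} [DecidableEq ι] (f : ι → ℕ) (s : Finset ι) :
    ∀ m : ℕ, m ≤ s.card → ∃ t ⊆ s, t.card = m ∧
      ∀ i ∈ t, ∀ j ∈ s, j ∉ t → f j ≤ f i := by
  intro m
  induction m with
  | zero => intro _; exact ⟨∅, empty_subset s, card_empty, by simp⟩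
  | succ m ih =>
    intro hm
    obtain ⟨t, hts, htc, htop⟩ := ih (le_of_lt hm)
    have hne : (s \ t).Nonempty := by
      rw [← Finset.card_pos, card_sdiff_of_subset hts]; omega
    obtain ⟨j0, hj0, hj0max⟩ := Finset.exists_max_image (s \ t) f hne
    have hj0s : j0 ∈ s := (mem_sdiff.1 hj0).1
    have hj0t : j0 ∉ t := (mem_sdiff.1 hj0).2
    refine ⟨insert j0 t, insert_subset hj0s hts, by rw [card_insert_of_notMem hj0t, htc], ?_⟩
    intro i hi j hj hjt
    rcases mem_insert.1 hi with rfl | hit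
    · exact hj0max j (mem_sdiff.2 ⟨hj, fun h => hjt (mem_insert_of_mem h)⟩)
    · exact htop i hit j hj (fun h => hjt (mem_insert_of_mem h))

lemma gale_ryser : ∀ (N : ℕ) (a b : ℕ) (d : Fin a → ℕ) (e : Fin b → ℕ),
    (∑ i, d i) = N → (∑ j, e j) = (∑ i, d i) →
    (∀ X : Finset (Fin a), ∑ i ∈ X, d i ≤ ∑ j, min (e j) X.card) →
    ∃ E : Finset (Fin a × Fin b),
      (∀ i, (E.filter (fun p => p.1 = i)).card = d i) ∧
      (∀ j, (E.filter (fun p => p.2 = j)).card = e j) := by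
  intro N
  induction N using Nat.strong_induction_on with
  | _ N IH =>
  intro a b d e hN hsum hGR
  by_cases hz : ∀ i, d i = 0
  · have he0 : ∀ j, e j = 0 := by
      have : ∑ j, e j = 0 := by rw [hsum]; exact Finset.sum_eq_zero (fun i _ => hz i)
      intro j
      exact (Finset.sum_eq_zero_iff).1 this j (mem_univ j)
    refine ⟨∅, fun i => by simp [hz i], fun j => by simp [he0 j]⟩
  · push_neg at hz
    obtain ⟨i1, hi1⟩ := hz
    have huniv : (univ : Finset (Fin a)).Nonempty := ⟨i1, mem_univ i1⟩
    obtain ⟨i0, -, hmax⟩ := Finset.exists_max_image univ d huniv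
    set m := d i0 with hm
    have hm1 : 1 ≤ m := by
      have := hmax i1 (mem_univ i1); omega
    -- m ≤ number of j with e j ≥ 1
    have hGR1 : m ≤ ∑ j, min (e j) 1 := by
      have := hGR {i0}
      simpa using this
    have hmincount : ∑ j, min (e j) 1 = (univ.filter (fun j => 1 ≤ e j)).card := by
      rw [Finset.card_filter]
      apply Finset.sum_congr rfl
      intro j _
      by_cases h : 1 ≤ e j
      · rw [min_eq_right h, if_pos h]
      · have h0 : e j = 0 := by omega
        simp [h0, h]
    have hmb : m ≤ b := by
      calc m ≤ (univ.filter (fun j => 1 ≤ e j)).card := hmincount ▸ hGR1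
        _ ≤ (univ : Finset (Fin b)).card := card_filter_le _ _
        _ = b := by simp
    obtain ⟨J, -, hJcard, hJtop⟩ := exists_top e univ m (by simpa using hmb)
    have hJ1 : ∀ j ∈ J, 1 ≤ e j := by
      by_contra hcon
      push_neg at hcon
      obtain ⟨j0, hj0J, hj0e⟩ := hcon
      have hsub : univ.filter (fun j => 1 ≤ e j) ⊆ J.erase j0 := by
        intro j hj
        rw [mem_filter] at hj
        have hjJ : j ∈ J := by
          by_contra hjJ
          have := hJtop j0 hj0J j (mem_univ j) hjJ
          omega
        refine mem_erase.2 ⟨?_, hjJ⟩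
        rintro rfl; omega
      have := card_le_card hsub
      rw [card_erase_of_mem hj0J, hJcard] at this
      have := hmincount ▸ hGR1
      omega
    -- new sequences
    set d' : Fin a → ℕ := Function.update d i0 0 with hd'
    set e' : Fin b → ℕ := fun j => if j ∈ J then e j - 1 else e j with he'
    have hd'sum : ∑ i, d' i + m = N := by
      rw [← hN, hd', Finset.sum_update_of_mem (mem_univ i0),
        Finset.sum_eq_sum_sdiff_singleton_add (mem_univ i0) d]
      omega
    have he'sum : ∑ j, e' j + m = ∑ j, e j := by
      have hfJ : univ.filter (· ∈ J) = J := by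
        ext j; simp
      have hsE' : ∑ j ∈ univ.filter (· ∈ J), e' j + ∑ j ∈ univ.filter (· ∉ J), e' j = ∑ j, e' j :=
        Finset.sum_filter_add_sum_filter_not univ (· ∈ J) e'
      have hsE : ∑ j ∈ univ.filter (· ∈ J), e j + ∑ j ∈ univ.filter (· ∉ J), e j = ∑ j, e j :=
        Finset.sum_filter_add_sum_filter_not univ (· ∈ J) e
      rw [hfJ] at hsE' hsE
      have h1 : ∑ j ∈ J, e' j + m = ∑ j ∈ J, e j := by
        rw [← hJcard, Finset.card_eq_sum_ones, ← Finset.sum_add_distrib]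
        apply Finset.sum_congr rfl
        intro j hj
        have := hJ1 j hj
        simp only [he', if_pos hj]
        omega
      have h2 : ∑ j ∈ univ.filter (· ∉ J), e' j = ∑ j ∈ univ.filter (· ∉ J), e j := by
        apply Finset.sum_congr rfl
        intro j hj
        rw [mem_filter] at hj
        simp only [he', if_neg hj.2]
      omega
    -- new Gale-Ryser condition
    have hGR' : ∀ X : Finset (Fin a), ∑ i ∈ X, d' i ≤ ∑ j, min (e' j) X.card := by
      intro X
      set Y := X.erase i0 with hYdef
      have hYX : Y.card ≤ X.card := card_le_card (erase_subset _ _)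
      have hsumY : ∑ i ∈ X, d' i = ∑ i ∈ Y, d i := by
        have hcong : ∀ i ∈ Y, d' i = d i := by
          intro i hi
          have hne : i ≠ i0 := Finset.ne_of_mem_erase hi
          simp [hd', Function.update_of_ne hne]
        by_cases hi0X : i0 ∈ X
        · have h1 : d' i0 + ∑ i ∈ Y, d' i = ∑ i ∈ X, d' i := Finset.add_sum_erase X d' hi0X
          have h2 : d' i0 = 0 := by simp [hd']
          rw [← h1, h2, zero_add]
          exact Finset.sum_congr rfl hcong
        · rw [hYdef, Finset.erase_eq_of_notMem hi0X] at *
          exact Finset.sum_congr rfl hcong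
      have hmono : ∑ j, min (e' j) Y.card ≤ ∑ j, min (e' j) X.card :=
        Finset.sum_le_sum (fun j _ => min_le_min le_rfl hYX)
      rw [hsumY]
      refine le_trans ?_ hmono
      set k := Y.card with hk
      have claimA : ∑ j, min (e j) k ≤ ∑ j, min (e' j) k
          + (J.filter (fun j => e j ≤ k)).card := by
      -- pointwise bound then sum
        have hpt : ∀ j : Fin b, min (e j) k ≤ min (e' j) k
            + (if j ∈ J ∧ e j ≤ k then 1 else 0) := by
          intro j
          by_cases hjJ : j ∈ J
          · have h1 : 1 ≤ e j := hJ1 j hjJ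
            simp only [he', if_pos hjJ, hjJ, true_and]
            by_cases hek : e j ≤ k <;> simp [hek] <;> omega
          · simp [he', hjJ]
        calc ∑ j, min (e j) k
            ≤ ∑ j, (min (e' j) k + (if j ∈ J ∧ e j ≤ k then 1 else 0)) :=
              Finset.sum_le_sum (fun j _ => hpt j)
          _ = ∑ j, min (e' j) k + ∑ j, (if j ∈ J ∧ e j ≤ k then 1 else 0) :=
              Finset.sum_add_distrib
          _ = ∑ j, min (e' j) k + (J.filter (fun j => e j ≤ k)).card := by
              congr 1
              rw [Finset.card_filter]
              rw [← Finset.sum_filter_add_sum_filter_not univ (· ∈ J)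
                (fun j => if j ∈ J ∧ e j ≤ k then 1 else 0)]
              have hfJ : univ.filter (· ∈ J) = J := by ext j; simp
              rw [hfJ]
              have hz : ∑ j ∈ univ.filter (· ∉ J), (if j ∈ J ∧ e j ≤ k then 1 else 0) = 0 := by
                apply Finset.sum_eq_zero
                intro j hj
                rw [mem_filter] at hj
                simp [hj.2]
              rw [hz, add_zero]
              apply Finset.sum_congr rfl
              intro j hj
              simp [hj]
      set l := (J.filter (fun j => e j ≤ k)).card with hl
      rcases Nat.eq_zero_or_pos l with hl0 | hlpos
      · have hgr := hGR Y
        rw [← hk] at hgr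
        omega
      · obtain ⟨j0, hj0⟩ := Finset.card_pos.1 (hl ▸ hlpos)
        rw [mem_filter] at hj0
        have htop : ∀ j, j ∉ J → e j ≤ k :=
          fun j hj => le_trans (hJtop j0 hj0.1 j (mem_univ j) hj) hj0.2
        have hcount : (univ.filter (fun j => k < e j)).card + l ≤ m := by
          have hsub : univ.filter (fun j => k < e j) ⊆ J.filter (fun j => ¬ (e j ≤ k)) := by
            intro j hj
            rw [mem_filter] at hj ⊢
            have hjJ : j ∈ J := by
              by_contra hjJ
              have := htop j hjJ
              omega
            exact ⟨hjJ, by omega⟩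
          have h1 := card_le_card hsub
          have h2 : (J.filter (fun j => e j ≤ k)).card
              + (J.filter (fun j => ¬ (e j ≤ k))).card = m := by
            rw [Finset.card_filter_add_card_filter_not, hJcard]
          omega
        have hstep : ∑ j, min (e j) (k+1) ≤ ∑ j, min (e j) k
            + (univ.filter (fun j => k < e j)).card := by
          calc ∑ j, min (e j) (k+1)
              ≤ ∑ j, (min (e j) k + (if k < e j then 1 else 0)) :=
                Finset.sum_le_sum (fun j _ => by by_cases h : k < e j <;> simp [h] <;> omega)
            _ = ∑ j, min (e j) k + ∑ j, (if k < e j then 1 else 0) := Finset.sum_add_distrib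
            _ = ∑ j, min (e j) k + (univ.filter (fun j => k < e j)).card := by
                rw [Finset.card_filter]
        have hi0Y : i0 ∉ Y := Finset.notMem_erase i0 X
        have hins := hGR (insert i0 Y)
        rw [Finset.sum_insert hi0Y, Finset.card_insert_of_notMem hi0Y, ← hk] at hins
        omega
    -- apply induction hypothesis
    have hNm : m ≤ N := by
      rw [← hN]
      exact Finset.single_le_sum (f := d) (fun i _ => Nat.zero_le _) (mem_univ i0)
    obtain ⟨E', hrow', hcol'⟩ := IH (N - m) (by omega) a b d' e' (by omega) (by omega) hGR'
    -- construct the edge set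
    set F : Finset (Fin a × Fin b) := J.image (fun j => (i0, j)) with hFdef
    have hFmem : ∀ p : Fin a × Fin b, p ∈ F ↔ p.1 = i0 ∧ p.2 ∈ J := by
      rintro ⟨p1, p2⟩
      simp only [hFdef, Finset.mem_image, Prod.mk.injEq]
      constructor
      · rintro ⟨j, hj, rfl, rfl⟩; exact ⟨rfl, hj⟩
      · rintro ⟨rfl, hj⟩; exact ⟨p2, hj, rfl, rfl⟩
    have hrow0 : (E'.filter (fun p => p.1 = i0)).card = 0 := by
      rw [hrow']; simp [hd']
    have hE'i0 : ∀ p ∈ E', p.1 ≠ i0 := by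
      intro p hp hpi
      have hmem : p ∈ E'.filter (fun p => p.1 = i0) := mem_filter.2 ⟨hp, hpi⟩
      rw [Finset.card_eq_zero] at hrow0
      rw [hrow0] at hmem
      exact absurd hmem (notMem_empty p)
    have hdisj : Disjoint E' F := by
      rw [Finset.disjoint_left]
      intro p hp hpF
      exact hE'i0 p hp ((hFmem p).1 hpF).1
    refine ⟨E' ∪ F, ?_, ?_⟩
    · intro i
      rw [Finset.filter_union,
        Finset.card_union_of_disjoint (Finset.disjoint_filter_filter hdisj)]
      by_cases hi : i = i0
      · have h2 : F.filter (fun p => p.1 = i0) = F :=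
          Finset.filter_eq_self.2 (fun p hp => ((hFmem p).1 hp).1)
        have h3 : F.card = m := by
          rw [hFdef, Finset.card_image_of_injective J (fun x y h => by simpa using h), hJcard]
        rw [hi, hrow0, h2, h3, zero_add]
      · have h1 : (E'.filter (fun p => p.1 = i)).card = d i := by
          rw [hrow', hd', Function.update_of_ne hi]
        have h2 : F.filter (fun p => p.1 = i) = ∅ := by
          rw [Finset.filter_eq_empty_iff]
          intro p hp
          rw [((hFmem p).1 hp).1]
          exact fun h => hi h.symm
        rw [h1, h2, Finset.card_empty, add_zero]
    · intro j
      rw [Finset.filter_union,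
        Finset.card_union_of_disjoint (Finset.disjoint_filter_filter hdisj)]
      by_cases hj : j ∈ J
      · have h2 : F.filter (fun p => p.2 = j) = {(i0, j)} := by
          ext p
          rw [Finset.mem_filter, Finset.mem_singleton]
          constructor
          · rintro ⟨hpF, hpj⟩
            obtain ⟨h1, -⟩ := (hFmem p).1 hpF
            exact Prod.ext h1 hpj
          · rintro rfl
            exact ⟨(hFmem (i0, j)).2 ⟨rfl, hj⟩, rfl⟩
        rw [hcol', h2, Finset.card_singleton]
        have := hJ1 j hj
        simp only [he', if_pos hj]
        omega
      · have h2 : F.filter (fun p => p.2 = j) = ∅ := by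
          rw [Finset.filter_eq_empty_iff]
          intro p hp hpj
          exact hj (hpj ▸ ((hFmem p).1 hp).2)
        rw [hcol', h2, Finset.card_empty, add_zero, he']
        simp [hj]


lemma star (M1 M2 A B n k : ℝ) (h1 : 0 < M1) (h12 : M1 ≤ M2) (h3 : M2*(M1+M2) ≤ M1*n)
    (hab : A + B = n) (ha : M2 ≤ A) (hb : M2 ≤ B) (hx1 : M1 ≤ k) (hx2 : k ≤ M2) :
    (M2-k)*(k*M2 - B*M1) ≤ M1*(A-k)*(k-M1) := by
  have hk0 : (0:ℝ) ≤ k := le_trans h1.le hx1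
  obtain rfl : B = n - A := by linarith
  rcases le_or_gt (2*k) (M1+M2) with h|h
  · nlinarith [mul_nonneg (mul_nonneg (sub_nonneg.2 h12) hk0) (sub_nonneg.2 hx1),
      mul_nonneg (sub_nonneg.2 h3) (sub_nonneg.2 hx1),
      mul_nonneg (mul_nonneg h1.le (sub_nonneg.2 hb)) (by linarith : (0:ℝ) ≤ M1 + M2 - 2*k)]
  · nlinarith [mul_nonneg (sub_nonneg.2 h12) (sq_nonneg (k - M2)),
      mul_nonneg (add_nonneg (mul_nonneg (sub_nonneg.2 h12) h1.le) (sub_nonneg.2 h3)) (sub_nonneg.2 hx2),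
      mul_nonneg (mul_nonneg h1.le (sub_nonneg.2 ha)) (by linarith : (0:ℝ) ≤ 2*k - M1 - M2)]

lemma hGR_of_bounds (c1 c2 : ℝ) (h0 : 0 ≤ c1) (h12 : c1 ≤ c2) (h3 : c2*(c1+c2) ≤ c1)
    (a b : ℕ) (hab : 0 < a + b) (d : Fin a → ℕ) (e : Fin b → ℕ)
    (hsum : ∑ j, e j = ∑ i, d i)
    (hd : ∀ i, c1*(a+b : ℕ) ≤ (d i : ℝ) ∧ (d i : ℝ) ≤ c2*(a+b : ℕ))
    (he : ∀ j, c1*(a+b : ℕ) ≤ (e j : ℝ) ∧ (e j : ℝ) ≤ c2*(a+b : ℕ)) :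
    ∀ X : Finset (Fin a), ∑ i ∈ X, d i ≤ ∑ j, min (e j) X.card := by
  intro X
  rcases eq_or_lt_of_le h0 with hc1 | hc1
  · -- c1 = 0 forces c2 = 0, all degrees zero
    have hc2 : c2 = 0 := by nlinarith
    have hdo : ∀ i ∈ X, d i = 0 := by
      intro i _
      have h1 := (hd i).2
      rw [hc2, zero_mul] at h1
      have : (d i : ℝ) = 0 := le_antisymm h1 (Nat.cast_nonneg _)
      exact_mod_cast this
    rw [Finset.sum_eq_zero hdo]
    exact Nat.zero_le _
  · -- main case
    set A : ℝ := (a : ℝ) with hA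
    set B : ℝ := (b : ℝ) with hB
    set n : ℝ := A + B with hn
    have hncast : ((a+b : ℕ) : ℝ) = n := by push_cast [hn]; ring
    have hnpos : (0:ℝ) < n := by
      rw [← hncast]; exact_mod_cast hab
    set M1 : ℝ := c1 * n with hM1
    set M2 : ℝ := c2 * n with hM2
    have hM1pos : 0 < M1 := mul_pos hc1 hnpos
    have hM12 : M1 ≤ M2 := mul_le_mul_of_nonneg_right h12 hnpos.le
    set S : ℝ := ((∑ i, d i : ℕ) : ℝ) with hS
    have hdS : ∑ i, (d i : ℝ) = S := by rw [hS]; push_cast; ring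
    have heS : ∑ j, (e j : ℝ) = S := by rw [hS, ← hsum]; push_cast; ring
    have hd' : ∀ i, M1 ≤ (d i : ℝ) ∧ (d i : ℝ) ≤ M2 := by
      intro i; rw [hM1, hM2, ← hncast]; exact hd i
    have he' : ∀ j, M1 ≤ (e j : ℝ) ∧ (e j : ℝ) ≤ M2 := by
      intro j; rw [hM1, hM2, ← hncast]; exact he j
    have hSA1 : A * M1 ≤ S := by
      rw [← hdS]
      calc A * M1 = ∑ _i : Fin a, M1 := by
            rw [Finset.sum_const, card_univ, Fintype.card_fin, nsmul_eq_mul]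
        _ ≤ ∑ i, (d i : ℝ) := Finset.sum_le_sum (fun i _ => (hd' i).1)
    have hSA2 : S ≤ A * M2 := by
      rw [← hdS]
      calc ∑ i, (d i : ℝ) ≤ ∑ _i : Fin a, M2 := Finset.sum_le_sum (fun i _ => (hd' i).2)
        _ = A * M2 := by rw [Finset.sum_const, card_univ, Fintype.card_fin, nsmul_eq_mul]
    have hSB1 : B * M1 ≤ S := by
      rw [← heS]
      calc B * M1 = ∑ _j : Fin b, M1 := by
            rw [Finset.sum_const, card_univ, Fintype.card_fin, nsmul_eq_mul]
        _ ≤ ∑ j, (e j : ℝ) := Finset.sum_le_sum (fun j _ => (he' j).1)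
    have hSB2 : S ≤ B * M2 := by
      rw [← heS]
      calc ∑ j, (e j : ℝ) ≤ ∑ _j : Fin b, M2 := Finset.sum_le_sum (fun j _ => (he' j).2)
        _ = B * M2 := by rw [Finset.sum_const, card_univ, Fintype.card_fin, nsmul_eq_mul]
    have hc12pos : 0 < c1 + c2 := by linarith
    have hBM2 : M2 ≤ B := by
      have h5 : A * c1 ≤ B * c2 := by
        have h6 : A * c1 * n ≤ B * c2 * n := by
          calc A * c1 * n = A * M1 := by rw [hM1]; ring
            _ ≤ S := hSA1
            _ ≤ B * M2 := hSB2
            _ = B * c2 * n := by rw [hM2]; ring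
        exact le_of_mul_le_mul_right h6 hnpos
      have h7 : n * c2 * (c1+c2) ≤ B * (c1+c2) := by nlinarith
      have h8 := le_of_mul_le_mul_right h7 hc12pos
      rw [hM2]; linarith
    have hAM2 : M2 ≤ A := by
      have h5 : B * c1 ≤ A * c2 := by
        have h6 : B * c1 * n ≤ A * c2 * n := by
          calc B * c1 * n = B * M1 := by rw [hM1]; ring
            _ ≤ S := hSB1
            _ ≤ A * M2 := hSA2
            _ = A * c2 * n := by rw [hM2]; ring
        exact le_of_mul_le_mul_right h6 hnpos
      have h7 : n * c2 * (c1+c2) ≤ A * (c1+c2) := by nlinarith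
      have h8 := le_of_mul_le_mul_right h7 hc12pos
      rw [hM2]; linarith
    -- cast goal to ℝ
    rw [← Nat.cast_le (α := ℝ)]
    push_cast
    set K : ℝ := (X.card : ℝ) with hK
    have hK0 : 0 ≤ K := Nat.cast_nonneg _
    have hKA : K ≤ A := by
      rw [hK, hA]
      exact_mod_cast (card_le_card (subset_univ X)).trans_eq (by simp)
    -- LHS bounds
    have hLup : ∑ i ∈ X, (d i : ℝ) ≤ K * M2 := by
      calc ∑ i ∈ X, (d i : ℝ) ≤ ∑ _i ∈ X, M2 := Finset.sum_le_sum (fun i _ => (hd' i).2)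
        _ = K * M2 := by rw [Finset.sum_const, nsmul_eq_mul, hK]
    have hLS : ∑ i ∈ X, (d i : ℝ) + (A - K) * M1 ≤ S := by
      have hsplit : ∑ i ∈ X, (d i : ℝ) + ∑ i ∈ Xᶜ, (d i : ℝ) = S := by
        rw [Finset.sum_add_sum_compl, hdS]
      have hcc : ((Xᶜ : Finset (Fin a)).card : ℝ) = A - K := by
        rw [Finset.card_compl]
        have hXa : X.card ≤ Fintype.card (Fin a) := card_le_univ X
        push_cast [Nat.cast_sub hXa]
        simp [hA, hK]
      have hcompl : (A - K) * M1 ≤ ∑ i ∈ Xᶜ, (d i : ℝ) := by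
        calc (A - K) * M1 = ∑ _i ∈ Xᶜ, M1 := by rw [Finset.sum_const, nsmul_eq_mul, hcc]
          _ ≤ ∑ i ∈ Xᶜ, (d i : ℝ) := Finset.sum_le_sum (fun i _ => (hd' i).1)
      linarith
    rcases le_or_gt K M1 with hKM1 | hKM1
    · -- small K : each min = K
      have hmin : ∀ j : Fin b, min ((e j : ℝ)) K = K := by
        intro j
        exact min_eq_right (le_trans hKM1 (he' j).1)
      calc ∑ i ∈ X, (d i : ℝ) ≤ K * M2 := hLup
        _ ≤ K * B := mul_le_mul_of_nonneg_left hBM2 hK0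
        _ = ∑ _j : Fin b, K := by rw [Finset.sum_const, card_univ, Fintype.card_fin, nsmul_eq_mul]; ring
        _ = ∑ j, min ((e j : ℝ)) K := by
            exact Finset.sum_congr rfl (fun j _ => (hmin j).symm)
    rcases le_or_gt M2 K with hKM2 | hKM2
    · -- large K : each min = e j
      have hmin : ∀ j : Fin b, min ((e j : ℝ)) K = (e j : ℝ) := by
        intro j
        exact min_eq_left (le_trans (he' j).2 hKM2)
      have hXS : ∑ i ∈ X, (d i : ℝ) ≤ S := by nlinarith [hLS, mul_nonneg (sub_nonneg.2 hKA) hM1pos.le]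
      calc ∑ i ∈ X, (d i : ℝ) ≤ S := hXS
        _ = ∑ j, min ((e j : ℝ)) K := by
            rw [← heS]; exact Finset.sum_congr rfl (fun j _ => (hmin j).symm)
    · -- middle range
      have hM2M1 : 0 < M2 - M1 := by linarith
      -- tangent-line lower bound on RHS
      have htan : B * (M1*(M2-M1)) + (K-M1)*(S - B*M1) ≤ (M2-M1) * ∑ j, min ((e j : ℝ)) K := by
        have hpt : ∀ j : Fin b, M1*(M2-M1) + (K-M1)*((e j : ℝ)-M1) ≤ (M2-M1) * min ((e j : ℝ)) K := by
          intro j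
          rcases le_total ((e j : ℝ)) K with h | h
          · rw [min_eq_left h]
            nlinarith [mul_nonneg (sub_nonneg.2 (he' j).1) (sub_nonneg.2 hKM2.le), (he' j).2]
          · rw [min_eq_right h]
            nlinarith [mul_nonneg (by linarith : (0:ℝ) ≤ K - M1) (sub_nonneg.2 (he' j).2)]
        calc B * (M1*(M2-M1)) + (K-M1)*(S - B*M1)
            = ∑ j : Fin b, (M1*(M2-M1) + (K-M1)*((e j : ℝ)-M1)) := by
              rw [Finset.sum_add_distrib, Finset.sum_const, card_univ, Fintype.card_fin, nsmul_eq_mul]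
              rw [← Finset.mul_sum, Finset.sum_sub_distrib, heS, Finset.sum_const, card_univ,
                Fintype.card_fin, nsmul_eq_mul]
          _ ≤ ∑ j, (M2-M1) * min ((e j : ℝ)) K := Finset.sum_le_sum (fun j _ => hpt j)
          _ = (M2-M1) * ∑ j, min ((e j : ℝ)) K := by rw [Finset.mul_sum]
      by_cases hAin : (M2-M1)*(K*M2 - B*M1) ≤ (K-M1)*(S - B*M1)
      · have hfinal : (M2-M1) * ∑ i ∈ X, (d i : ℝ) ≤ (M2-M1) * ∑ j, min ((e j : ℝ)) K := by
          nlinarith [mul_le_mul_of_nonneg_left hLup hM2M1.le]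
        exact le_of_mul_le_mul_left hfinal hM2M1
      · push_neg at hAin
        have hstar := star M1 M2 A B n K hM1pos hM12
          (by nlinarith [sq_nonneg n] : M2*(M1+M2) ≤ M1*n) hn.symm hAM2 hBM2 hKM1.le hKM2.le
        have hKM1' : 0 < K - M1 := by linarith
        have key2 : (M2-K)*(S-B*M1) ≤ M1*(M2-M1)*(A-K) := by
          have t1 : (M2-K)*((K-M1)*(S - B*M1)) ≤ (M2-K)*((M2-M1)*(K*M2 - B*M1)) :=
            mul_le_mul_of_nonneg_left hAin.le (by linarith)
          have t3 : (M2-M1)*((M2-K)*(K*M2 - B*M1)) ≤ (M2-M1)*(M1*(A-K)*(K-M1)) :=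
            mul_le_mul_of_nonneg_left hstar hM2M1.le
          have hmul : (K-M1)*((M2-K)*(S-B*M1)) ≤ (K-M1)*(M1*(M2-M1)*(A-K)) := by
            nlinarith [t1, t3]
          exact le_of_mul_le_mul_left hmul hKM1'
        have hfinal : (M2-M1) * ∑ i ∈ X, (d i : ℝ) ≤ (M2-M1) * ∑ j, min ((e j : ℝ)) K := by
          have hLS' : (M2-M1) * (∑ i ∈ X, (d i : ℝ)) ≤ (M2-M1) * (S - (A-K)*M1) :=
            mul_le_mul_of_nonneg_left (by linarith) hM2M1.le
          nlinarith [hLS', key2, htan]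
        exact le_of_mul_le_mul_left hfinal hM2M1

lemma exists_enum (s : Multiset ℕ) :
    ∃ d : Fin (Multiset.card s) → ℕ, Finset.univ.val.map d = s := by
  refine Quotient.inductionOn s (fun l => ?_)
  refine ⟨fun i => l.get i, ?_⟩
  rw [Fin.univ_val_map]
  show ((List.ofFn l.get : List ℕ) : Multiset ℕ) = _
  rw [List.ofFn_get]
  rfl

/-- If `0 ≤ c1 ≤ c2 ≤ (√(c1(c1+4)) - c1)/2` and `D1`, `D2` are degree sequences of
total length `n` with equal sums, all of whose entries lie in `[c1·n, c2·n]`, then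
`(D1, D2)` is bigraphic. -/
theorem stmt12 (c1 c2 : ℝ) (h0 : 0 ≤ c1) (h12 : c1 ≤ c2)
    (h2 : c2 ≤ (Real.sqrt (c1 * (c1 + 4)) - c1) / 2)
    (n : ℕ) (hn : 0 < n) (D1 D2 : Multiset ℕ)
    (hcard : Multiset.card D1 + Multiset.card D2 = n)
    (hsum : D1.sum = D2.sum)
    (hb1 : ∀ d ∈ D1, c1 * n ≤ (d : ℝ) ∧ (d : ℝ) ≤ c2 * n)
    (hb2 : ∀ d ∈ D2, c1 * n ≤ (d : ℝ) ∧ (d : ℝ) ≤ c2 * n) :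
    BigraphicM D1 D2 := by
  obtain ⟨d, hd⟩ := exists_enum D1
  obtain ⟨e, he⟩ := exists_enum D2
  have hab : 0 < Multiset.card D1 + Multiset.card D2 := hcard ▸ hn
  have hmemd : ∀ i, d i ∈ D1 := by
    intro i
    rw [← hd]
    exact Multiset.mem_map_of_mem d (Finset.mem_univ i)
  have hmeme : ∀ j, e j ∈ D2 := by
    intro j
    rw [← he]
    exact Multiset.mem_map_of_mem e (Finset.mem_univ j)
  have hsumd : ∑ i, d i = D1.sum := congrArg Multiset.sum hd
  have hsume : ∑ j, e j = D2.sum := congrArg Multiset.sum he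
  have hsum' : ∑ j, e j = ∑ i, d i := by rw [hsumd, hsume, hsum]
  have hncast : ((Multiset.card D1 + Multiset.card D2 : ℕ) : ℝ) = (n : ℝ) := by
    exact_mod_cast congrArg (Nat.cast : ℕ → ℝ) hcard
  have hboundsd : ∀ i, c1 * ((Multiset.card D1 + Multiset.card D2 : ℕ) : ℝ) ≤ (d i : ℝ) ∧
      (d i : ℝ) ≤ c2 * ((Multiset.card D1 + Multiset.card D2 : ℕ) : ℝ) := by
    intro i; rw [hncast]; exact hb1 _ (hmemd i)
  have hboundse : ∀ j, c1 * ((Multiset.card D1 + Multiset.card D2 : ℕ) : ℝ) ≤ (e j : ℝ) ∧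
      (e j : ℝ) ≤ c2 * ((Multiset.card D1 + Multiset.card D2 : ℕ) : ℝ) := by
    intro j; rw [hncast]; exact hb2 _ (hmeme j)
  have h3 : c2 * (c1 + c2) ≤ c1 := by
    have hs : 2*c2 + c1 ≤ Real.sqrt (c1 * (c1 + 4)) := by linarith
    have hpos : (0:ℝ) ≤ 2*c2 + c1 := by linarith
    have hsq : (2*c2 + c1)^2 ≤ c1 * (c1 + 4) := by
      have h4 : (2*c2 + c1)^2 ≤ Real.sqrt (c1 * (c1 + 4))^2 := by
        exact pow_le_pow_left₀ hpos hs 2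
      rwa [Real.sq_sqrt (by nlinarith : (0:ℝ) ≤ c1 * (c1 + 4))] at h4
    nlinarith
  have hGR := hGR_of_bounds c1 c2 h0 h12 h3 (Multiset.card D1) (Multiset.card D2)
    hab d e hsum' hboundsd hboundse
  obtain ⟨E, hrow, hcol⟩ := gale_ryser (∑ i, d i) (Multiset.card D1) (Multiset.card D2)
    d e rfl hsum' hGR
  refine ⟨E, ?_, ?_⟩
  · exact ((Multiset.map_congr rfl (fun i _ => hrow i)).trans hd).symm
  · exact ((Multiset.map_congr rfl (fun j _ => hcol j)).trans he).symm
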